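/- Let m ∈ ℕ with m ≥ 2 be fixed, let 0 < T ≤ m−1, and let g(t) = t^m on [0,T]. Then lim_{β→0⁺} ‖ᶜᶠ₀D^{1−β}g − g'‖_{L¹(0,T)} / ‖ᶜ₀D^{1−β}g − g'‖_{L¹(0,T)} = ((m−T)/T) · 1/(Ψ(m+1) − ln T), where Ψ is the digamma function Ψ(x) = Γ'(x)/Γ(x). -/

import Mathlib

open MeasureTheory Filter Set

/-- Caputo fractional derivative of order `α` with base point `a`,
expressed in terms of the derivative `g'`. -/
noncomputable def caputoD (a α : ℝ) (g' : ℝ → ℝ) (t : ℝ) : ℝ :=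
  (1 / Real.Gamma (1 - α)) * ∫ τ in a..t, g' τ * (t - τ) ^ (-α)

/-- Caputo–Fabrizio fractional derivative of order `α` with base point `a`,
expressed in terms of the derivative `g'`. -/
noncomputable def cfD (a α : ℝ) (g' : ℝ → ℝ) (t : ℝ) : ℝ :=
  (1 / (1 - α)) * ∫ τ in a..t, g' τ * Real.exp (-(α / (1 - α)) * (t - τ))

/-- The digamma function `Ψ(x) = Γ'(x)/Γ(x)`. -/
noncomputable def digamma (x : ℝ) : ℝ := deriv Real.Gamma x / Real.Gamma x

open intervalIntegral in
lemma real_beta {a b t : ℝ} (ha : 0 < a) (hb : 0 < b) (ht : 0 < t) :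
    ∫ τ in (0:ℝ)..t, τ ^ (a-1) * (t - τ) ^ (b-1)
      = Real.Gamma a * Real.Gamma b / Real.Gamma (a+b) * t ^ (a+b-1) := by
  have hG : Real.Gamma (a+b) ≠ 0 := (Real.Gamma_pos_of_pos (by linarith)).ne'
  have key := Complex.betaIntegral_scaled (a:ℂ) (b:ℂ) ht
  have hbeta : Complex.betaIntegral a b =
      (Complex.Gamma a * Complex.Gamma b) / Complex.Gamma ((a:ℂ)+b) := by
    rw [eq_div_iff ?hne]
    · rw [mul_comm, ← Complex.Gamma_mul_Gamma_eq_betaIntegral] <;>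
        simpa using ‹_›
    case hne =>
      rw [(by push_cast; ring : ((a:ℂ)+b) = ((a+b:ℝ):ℂ)), Complex.Gamma_ofReal]
      exact_mod_cast hG
  have h1 : (∫ x in (0:ℝ)..t, (x:ℂ) ^ ((a:ℂ) - 1) * ((t:ℂ) - x) ^ ((b:ℂ) - 1))
      = ((∫ τ in (0:ℝ)..t, τ ^ (a-1) * (t - τ) ^ (b-1) : ℝ) : ℂ) := by
    rw [← intervalIntegral.integral_ofReal]
    apply intervalIntegral.integral_congr
    intro x hx
    rw [uIcc_of_le ht.le] at hx
    push_cast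
    rw [Complex.ofReal_cpow hx.1, Complex.ofReal_cpow (by linarith [hx.2] : (0:ℝ) ≤ t - x)]
    push_cast
    ring
  rw [h1, hbeta] at key
  have h2 : ((t:ℂ)) ^ ((a:ℂ) + b - 1) = ((t ^ (a+b-1) : ℝ) : ℂ) := by
    rw [Complex.ofReal_cpow ht.le]
    push_cast
    ring_nf
  rw [h2] at key
  have h3 : (Complex.Gamma a * Complex.Gamma b) / Complex.Gamma ((a:ℂ)+b)
      = ((Real.Gamma a * Real.Gamma b / Real.Gamma (a+b) : ℝ) : ℂ) := by
    rw [(by push_cast; ring : ((a:ℂ)+b) = ((a+b:ℝ):ℂ))]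
    rw [Complex.Gamma_ofReal, Complex.Gamma_ofReal, Complex.Gamma_ofReal]
    push_cast
    ring
  rw [h3, ← Complex.ofReal_mul] at key
  have := Complex.ofReal_inj.mp key
  rw [this]; ring

lemma caputo_value (m : ℕ) (hm : 2 ≤ m) {β t : ℝ} (hβ0 : 0 < β) (hβ1 : β < 1) (ht : 0 < t) :
    caputoD 0 (1 - β) (fun τ => (m:ℝ) * τ ^ (m-1)) t
      = Real.Gamma ((m:ℝ)+1) / Real.Gamma ((m:ℝ)+β) * t ^ ((m:ℝ) + β - 1) := by
  have hm0 : 0 < (m:ℝ) := by positivity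
  have hΓβ : Real.Gamma β ≠ 0 := (Real.Gamma_pos_of_pos hβ0).ne'
  have hcongr : ∫ τ in (0:ℝ)..t, ((m:ℝ) * τ ^ (m-1)) * (t - τ) ^ (-(1-β))
      = (m:ℝ) * ∫ τ in (0:ℝ)..t, τ ^ ((m:ℝ)-1) * (t - τ) ^ (β-1) := by
    rw [← intervalIntegral.integral_const_mul]
    apply intervalIntegral.integral_congr
    intro x hx
    have h1 : x ^ ((m:ℝ)-1) = x ^ (m-1 : ℕ) := by
      rw [← Real.rpow_natCast x (m-1)]
      congr 1
      have : (1:ℕ) ≤ m := by omega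
      push_cast [Nat.cast_sub this]
      ring
    simp only []
    rw [h1, show -(1-β) = β - 1 by ring]
    ring
  unfold caputoD
  rw [hcongr, real_beta hm0 hβ0 ht]
  rw [show (1 - (1-β)) = β by ring]
  have hΓm1 : Real.Gamma ((m:ℝ)+1) = (m:ℝ) * Real.Gamma (m:ℝ) := by
    rw [Real.Gamma_add_one hm0.ne']
  rw [hΓm1]
  field_simp

lemma Gamma_lb (m : ℕ) (hm : 2 ≤ m) {β : ℝ} (hβ0 : 0 < β) :
    Real.Gamma (m:ℝ) * ((m:ℝ)-1) ^ β ≤ Real.Gamma ((m:ℝ)+β) := by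
  have hm1 : (0:ℝ) < (m:ℝ) - 1 := by
    have : (2:ℝ) ≤ (m:ℝ) := by exact_mod_cast hm
    linarith
  have hm0 : (0:ℝ) < (m:ℝ) := by linarith
  have hc := Real.convexOn_log_Gamma
  have hs := hc.slope_mono_adjacent (x := (m:ℝ)-1) (y := (m:ℝ)) (z := (m:ℝ)+β)
    (mem_Ioi.mpr hm1) (mem_Ioi.mpr (by linarith)) (by linarith) (by linarith)
  have hrec : Real.Gamma (m:ℝ) = ((m:ℝ)-1) * Real.Gamma ((m:ℝ)-1) := by
    have := Real.Gamma_add_one hm1.ne'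
    rw [sub_add_cancel] at this
    exact this
  have hΓm : 0 < Real.Gamma (m:ℝ) := Real.Gamma_pos_of_pos hm0
  have hΓm1 : 0 < Real.Gamma ((m:ℝ)-1) := Real.Gamma_pos_of_pos hm1
  have hΓmβ : 0 < Real.Gamma ((m:ℝ)+β) := Real.Gamma_pos_of_pos (by linarith)
  simp only [Function.comp] at hs
  rw [show (m:ℝ) - ((m:ℝ)-1) = 1 by ring, show (m:ℝ)+β-(m:ℝ) = β by ring, div_one] at hs
  have hslope : Real.log (Real.Gamma (m:ℝ)) - Real.log (Real.Gamma ((m:ℝ)-1))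
      = Real.log ((m:ℝ)-1) := by
    rw [hrec, Real.log_mul hm1.ne' hΓm1.ne']
    ring
  rw [hslope, le_div_iff₀ hβ0] at hs
  -- hs : log(m-1) * β ≤ log Γ(m+β) - log Γ m
  have := Real.exp_le_exp.mpr (by linarith : Real.log (Real.Gamma (m:ℝ)) + Real.log ((m:ℝ)-1) * β
      ≤ Real.log (Real.Gamma ((m:ℝ)+β)))
  rw [Real.exp_add, Real.exp_log hΓm, Real.exp_log hΓmβ] at this
  rwa [Real.rpow_def_of_pos hm1]

lemma digamma_gt (m : ℕ) (hm : 2 ≤ m) :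
    Real.log ((m:ℝ)-1) < deriv Real.Gamma ((m:ℝ)+1) / Real.Gamma ((m:ℝ)+1) := by
  have hm0 : (0:ℝ) < (m:ℝ) := by positivity
  have hm1 : (0:ℝ) < (m:ℝ) - 1 := by
    have : (2:ℝ) ≤ (m:ℝ) := by exact_mod_cast hm
    linarith
  have hc := Real.convexOn_log_Gamma
  have hdiff : DifferentiableAt ℝ (Real.log ∘ Real.Gamma) ((m:ℝ)+1) := by
    apply DifferentiableAt.comp
    · exact Real.differentiableAt_log (Real.Gamma_pos_of_pos (by linarith)).ne'
    · exact Real.differentiableAt_Gamma (fun n => by push_cast; nlinarith [Nat.cast_nonneg (α := ℝ) n])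
  have hs := hc.slope_le_deriv (mem_Ioi.mpr hm0) (mem_Ioi.mpr (by linarith : (0:ℝ) < (m:ℝ)+1))
    (by linarith) hdiff
  have hrec : Real.Gamma ((m:ℝ)+1) = (m:ℝ) * Real.Gamma (m:ℝ) := Real.Gamma_add_one hm0.ne'
  have hΓm : 0 < Real.Gamma (m:ℝ) := Real.Gamma_pos_of_pos hm0
  have hΓm1 : 0 < Real.Gamma ((m:ℝ)+1) := Real.Gamma_pos_of_pos (by linarith)
  have hslope : slope (Real.log ∘ Real.Gamma) (m:ℝ) ((m:ℝ)+1) = Real.log (m:ℝ) := by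
    rw [slope_def_field, show (m:ℝ)+1-(m:ℝ) = 1 by ring, div_one, Function.comp_apply,
      Function.comp_apply, hrec, Real.log_mul hm0.ne' hΓm.ne']
    ring
  have hderiv : deriv (Real.log ∘ Real.Gamma) ((m:ℝ)+1)
      = deriv Real.Gamma ((m:ℝ)+1) / Real.Gamma ((m:ℝ)+1) := by
    rw [Function.comp_def]
    exact deriv.log (Real.differentiableAt_Gamma
      (fun n => by push_cast; nlinarith [Nat.cast_nonneg (α := ℝ) n])) hΓm1.ne'
  rw [hslope, hderiv] at hs
  calc Real.log ((m:ℝ)-1) < Real.log (m:ℝ) := by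
        apply Real.log_lt_log hm1; linarith
    _ ≤ _ := hs

lemma caputo_L1 (m : ℕ) (hm : 2 ≤ m) {T : ℝ} (hT0 : 0 < T) (hTm : T ≤ (m:ℝ) - 1)
    {β : ℝ} (hβ0 : 0 < β) (hβ1 : β < 1) :
    ∫ t in Set.Ioo 0 T, |caputoD 0 (1-β) (fun τ => (m:ℝ)*τ^(m-1)) t - (m:ℝ)*t^(m-1)|
      = T^(m:ℕ) - Real.Gamma ((m:ℝ)+1) / Real.Gamma ((m:ℝ)+1+β) * T ^ ((m:ℝ)+β) := by
  have hm0 : (0:ℝ) < (m:ℝ) := by positivity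
  set C : ℝ := Real.Gamma ((m:ℝ)+1) / Real.Gamma ((m:ℝ)+β) with hC
  have hΓmβ : 0 < Real.Gamma ((m:ℝ)+β) := Real.Gamma_pos_of_pos (by linarith)
  have hΓm : 0 < Real.Gamma (m:ℝ) := Real.Gamma_pos_of_pos hm0
  have key : ∀ t ∈ Set.Ioo (0:ℝ) T,
      |caputoD 0 (1-β) (fun τ => (m:ℝ)*τ^(m-1)) t - (m:ℝ)*t^(m-1)|
        = (m:ℝ)*t^(m-1) - C * t ^ ((m:ℝ) + β - 1) := by
    intro t ht
    obtain ⟨ht0, htT⟩ := ht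
    rw [caputo_value m hm hβ0 hβ1 ht0, ← hC, abs_sub_comm, abs_of_nonneg]
    have hsplit : t ^ ((m:ℝ) + β - 1) = t ^ ((m:ℝ) - 1) * t ^ β := by
      rw [← Real.rpow_add ht0]; ring_nf
    have hnat : t ^ ((m:ℝ) - 1) = t ^ (m-1 : ℕ) := by
      rw [← Real.rpow_natCast t (m-1)]
      congr 1
      have : (1:ℕ) ≤ m := by omega
      push_cast [Nat.cast_sub this]; ring
    have htβ : t ^ β ≤ ((m:ℝ)-1) ^ β :=
      Real.rpow_le_rpow ht0.le (by linarith) hβ0.le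
    have hCb : C * t ^ β ≤ (m:ℝ) := by
      have h1 : Real.Gamma ((m:ℝ)+1) = (m:ℝ) * Real.Gamma (m:ℝ) := Real.Gamma_add_one hm0.ne'
      have h2 : Real.Gamma (m:ℝ) * t ^ β ≤ Real.Gamma ((m:ℝ)+β) := by
        calc Real.Gamma (m:ℝ) * t ^ β ≤ Real.Gamma (m:ℝ) * ((m:ℝ)-1) ^ β := by
              apply mul_le_mul_of_nonneg_left htβ hΓm.le
          _ ≤ _ := Gamma_lb m hm hβ0
      rw [hC, h1]
      rw [div_mul_eq_mul_div, div_le_iff₀ hΓmβ]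
      calc (m:ℝ) * Real.Gamma (m:ℝ) * t ^ β = (m:ℝ) * (Real.Gamma (m:ℝ) * t ^ β) := by ring
        _ ≤ (m:ℝ) * Real.Gamma ((m:ℝ)+β) := by
            apply mul_le_mul_of_nonneg_left h2 hm0.le
    rw [hsplit, hnat, sub_nonneg, show C * (t ^ (m-1:ℕ) * t ^ β) = (C * t ^ β) * t ^ (m-1:ℕ) by ring]
    apply mul_le_mul_of_nonneg_right hCb (by positivity)
  rw [setIntegral_congr_fun measurableSet_Ioo key, ← integral_Ioc_eq_integral_Ioo,
    ← intervalIntegral.integral_of_le hT0.le]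
  have hint1 : IntervalIntegrable (fun t : ℝ => (m:ℝ)*t^(m-1)) volume 0 T :=
    (continuous_const.mul (continuous_pow _)).intervalIntegrable 0 T
  have hint2 : IntervalIntegrable (fun t : ℝ => C * t ^ ((m:ℝ) + β - 1)) volume 0 T := by
    apply IntervalIntegrable.const_mul
    apply intervalIntegral.intervalIntegrable_rpow' (by linarith : (-1:ℝ) < (m:ℝ) + β - 1)
  rw [intervalIntegral.integral_sub hint1 hint2, intervalIntegral.integral_const_mul,
    intervalIntegral.integral_const_mul, integral_pow, integral_rpow (Or.inl (by linarith))]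
  have e1 : (m:ℝ) * ((T ^ (m-1+1) - 0 ^ (m-1+1)) / (((m-1:ℕ):ℝ)+1)) = T ^ (m:ℕ) := by
    have hne : m - 1 + 1 = m := by omega
    have hcast : ((m-1:ℕ):ℝ) + 1 = (m:ℝ) := by
      have : (1:ℕ) ≤ m := by omega
      push_cast [Nat.cast_sub this]; ring
    rw [hne, hcast, zero_pow (by omega), sub_zero]
    field_simp
  rw [e1]
  have e2 : (0:ℝ) ^ ((m:ℝ) + β - 1 + 1) = 0 := by
    apply Real.zero_rpow; intro h; nlinarith
  rw [e2, sub_zero, show (m:ℝ) + β - 1 + 1 = (m:ℝ) + β by ring]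
  have hΓ1 : Real.Gamma ((m:ℝ)+1+β) = ((m:ℝ)+β) * Real.Gamma ((m:ℝ)+β) := by
    rw [show (m:ℝ)+1+β = ((m:ℝ)+β)+1 by ring, Real.Gamma_add_one (by linarith : (m:ℝ)+β ≠ 0)]
  rw [hC, hΓ1]
  field_simp

noncomputable def Jf (m : ℕ) (T β : ℝ) : ℝ :=
  ∫ τ in (0:ℝ)..T, ((m:ℝ)*((m-1:ℕ):ℝ)*τ^(m-2)) * Real.exp (-((1-β)/β)*(T-τ))

lemma Jf_nonneg (m : ℕ) {T β : ℝ} (hT0 : 0 < T) (hβ0 : 0 < β) (hβ1 : β < 1) :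
    0 ≤ Jf m T β := by
  apply intervalIntegral.integral_nonneg hT0.le
  intro u hu
  have hu0 : 0 ≤ u := hu.1
  positivity

lemma Jf_le (m : ℕ) (hm : 2 ≤ m) {T β : ℝ} (hT0 : 0 < T) (hβ0 : 0 < β) (hβ1 : β < 1) :
    Jf m T β ≤ ((m:ℝ)*((m-1:ℕ):ℝ)*T^(m-2)) * (β/(1-β)) := by
  set l : ℝ := (1-β)/β with hl
  have hl0 : 0 < l := div_pos (by linarith) hβ0
  set M : ℝ := (m:ℝ)*((m-1:ℕ):ℝ)*T^(m-2) with hM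
  have hM0 : 0 ≤ M := by positivity
  have h1 : Jf m T β ≤ ∫ τ in (0:ℝ)..T, M * Real.exp (-l*(T-τ)) := by
    apply intervalIntegral.integral_mono_on hT0.le
    · apply ContinuousOn.intervalIntegrable
      apply Continuous.continuousOn
      fun_prop
    · apply ContinuousOn.intervalIntegrable
      apply Continuous.continuousOn
      fun_prop
    · intro x hx
      apply mul_le_mul_of_nonneg_right _ (Real.exp_nonneg _)
      apply mul_le_mul_of_nonneg_left _ (by positivity)
      exact pow_le_pow_left₀ hx.1 hx.2 _
  have h2 : ∫ τ in (0:ℝ)..T, M * Real.exp (-l*(T-τ))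
      = M * ((1 - Real.exp (-l*T))/l) := by
    have hanti : ∀ τ ∈ uIcc (0:ℝ) T,
        HasDerivAt (fun τ => M * Real.exp (-l*(T-τ)) / l) (M * Real.exp (-l*(T-τ))) τ := by
      intro τ _
      have h : HasDerivAt (fun τ : ℝ => -l*(T-τ)) l τ := by
        have := ((hasDerivAt_id τ).const_mul l).const_add (-l*T)
        convert this using 1
        · rfl
        · rfl
        · funext x; simp only [id]; ring
        · ring
      have := (h.exp.const_mul M).div_const l
      convert this using 1
      rfl
      rfl
      field_simp
    rw [intervalIntegral.integral_eq_sub_of_hasDerivAt hanti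
      (by apply ContinuousOn.intervalIntegrable; apply Continuous.continuousOn; fun_prop)]
    rw [sub_zero, sub_self, mul_zero, Real.exp_zero]
    field_simp
  calc Jf m T β ≤ M * ((1 - Real.exp (-l*T))/l) := h2 ▸ h1
    _ ≤ M * (1/l) := by
        apply mul_le_mul_of_nonneg_left _ hM0
        gcongr
        · linarith [Real.exp_nonneg (-l*T)]
    _ = M * (β/(1-β)) := by
        rw [hl]; congr 1; field_simp

lemma cf_L1 (m : ℕ) (hm : 2 ≤ m) {T β : ℝ} (hT0 : 0 < T) (hTm : T ≤ (m:ℝ)-1)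
    (hβ0 : 0 < β) (hβ1 : β < 1) :
    ∫ t in Set.Ioo 0 T, |cfD 0 (1-β) (fun τ => (m:ℝ)*τ^(m-1)) t - (m:ℝ)*t^(m-1)|
      = β * ((m:ℝ)*T^(m-1) - Jf m T β - (1-β)*T^(m:ℕ)) / (1-β)^2 := by
  have hm1 : (2:ℝ) ≤ (m:ℝ) := by exact_mod_cast hm
  set l : ℝ := (1-β)/β with hldef
  have hl0 : 0 < l := div_pos (by linarith) hβ0
  have hbl : β * l = 1 - β := by rw [hldef]; field_simp
  set g' : ℝ → ℝ := fun τ => (m:ℝ)*τ^(m-1) with hg'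
  have hg'c : Continuous g' := by fun_prop
  have hg'0 : g' 0 = 0 := by
    show (m:ℝ) * (0:ℝ)^(m-1) = 0
    rw [zero_pow (by omega : m - 1 ≠ 0)]
    ring
  -- derivative of g'
  have hgd : ∀ t : ℝ, HasDerivAt g' ((m:ℝ)*((m-1:ℕ):ℝ)*t^(m-2)) t := by
    intro t
    have := (hasDerivAt_pow (m-1) t).const_mul (m:ℝ)
    convert this using 1
    rfl
    rfl
    have : m - 1 - 1 = m - 2 := by omega
    rw [this]
    ring
  set P : ℝ → ℝ := fun t => ∫ τ in (0:ℝ)..t, g' τ * Real.exp (l*τ) with hP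
  have hPd : ∀ t : ℝ, HasDerivAt P (g' t * Real.exp (l*t)) t := by
    intro t
    exact ((hg'c.mul (by fun_prop)).integral_hasStrictDerivAt 0 t).hasDerivAt
  set K : ℝ → ℝ := fun t => Real.exp (-l*t) * P t with hK
  have hKd : ∀ t : ℝ, HasDerivAt K (g' t - l * K t) t := by
    intro t
    have h1 : HasDerivAt (fun t : ℝ => Real.exp (-l*t)) (Real.exp (-l*t) * (-l)) t := by
      have h : HasDerivAt (fun t : ℝ => -l*t) (-l) t := by
        simpa using (hasDerivAt_id t).const_mul (-l)
      exact h.exp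
    have := h1.mul (hPd t)
    convert this using 1
    rfl
    rfl
    rfl
    simp only [hK]
    rw [show Real.exp (-l*t) * (g' t * Real.exp (l*t)) = g' t * (Real.exp (-l*t) * Real.exp (l*t)) by ring,
      ← Real.exp_add]
    ring_nf
    rw [Real.exp_zero]
    ring
  have hKc : Continuous K := continuous_iff_continuousAt.mpr fun t => (hKd t).continuousAt
  have hK0 : K 0 = 0 := by
    simp only [hK, hP]
    rw [intervalIntegral.integral_same]
    ring
  -- cfD equals (1/β) * K
  have hcf : ∀ t : ℝ, cfD 0 (1-β) g' t = (1/β) * K t := by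
    intro t
    unfold cfD
    rw [show (1 - (1-β)) = β by ring]
    congr 1
    simp only [hK, hP, ← intervalIntegral.integral_const_mul]
    apply intervalIntegral.integral_congr
    intro x hx
    show g' x * Real.exp (-((1-β)/β)*(t-x)) = Real.exp (-l*t) * (g' x * Real.exp (l*x))
    rw [show Real.exp (-l*t) * (g' x * Real.exp (l*x)) = g' x * (Real.exp (-l*t) * Real.exp (l*x)) by ring,
      ← Real.exp_add, hldef]
    ring_nf
  -- sign : cfD ≤ g' on [0,T]
  set R : ℝ → ℝ := fun t => β * g' t * Real.exp (l*t) - P t with hR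
  have hRd : ∀ t : ℝ, HasDerivAt R
      (β * Real.exp (l*t) * ((m:ℝ)*((m-1:ℕ):ℝ)*t^(m-2) - g' t)) t := by
    intro t
    have hexp : HasDerivAt (fun t : ℝ => Real.exp (l*t)) (Real.exp (l*t) * l) t := by
      have h : HasDerivAt (fun t : ℝ => l*t) l t := by
        simpa using (hasDerivAt_id t).const_mul l
      exact h.exp
    have h2 := (((hgd t).const_mul β).mul hexp).sub (hPd t)
    convert h2 using 1
    rfl
    rfl
    rfl
    linear_combination (-(g' t * Real.exp (l*t))) * hbl
  have hRmono : MonotoneOn R (Icc 0 T) := by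
    apply monotoneOn_of_deriv_nonneg (convex_Icc 0 T)
    · exact (Continuous.continuousOn (by fun_prop))
    · intro t ht
      exact ((hRd t).differentiableAt).differentiableWithinAt
    · intro t ht
      rw [interior_Icc] at ht
      rw [(hRd t).deriv]
      have ht0 : 0 ≤ t := ht.1.le
      have htT : t ≤ T := ht.2.le
      have hd : 0 ≤ (m:ℝ)*((m-1:ℕ):ℝ)*t^(m-2) - g' t := by
        simp only [hg']
        have hpow : t^(m-1) = t^(m-2) * t := by
          rw [← pow_succ]
          congr 1
          omega
        rw [hpow]
        have hcast : ((m-1:ℕ):ℝ) = (m:ℝ) - 1 := by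
          have : (1:ℕ) ≤ m := by omega
          push_cast [Nat.cast_sub this]; ring
        rw [hcast]
        have hkey : 0 ≤ (m:ℝ) * (t^(m-2) * (((m:ℝ)-1) - t)) := by
          apply mul_nonneg (by positivity)
          apply mul_nonneg (pow_nonneg ht0 _)
          linarith
        nlinarith [hkey]
      positivity
  have hsign : ∀ t ∈ Set.Icc (0:ℝ) T, cfD 0 (1-β) g' t ≤ g' t := by
    intro t ht
    have hR0 : R 0 = 0 := by
      simp only [hR, hP, hg'0]
      rw [intervalIntegral.integral_same]
      ring
    have hRt : 0 ≤ R t := by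
      rw [← hR0]
      exact hRmono (Set.left_mem_Icc.mpr hT0.le) ht ht.1
    have hPle : P t ≤ β * g' t * Real.exp (l*t) := by
      simp only [hR] at hRt; linarith
    rw [hcf t]
    calc (1/β) * K t = (1/β) * Real.exp (-l*t) * P t := by rw [hK]; ring
      _ ≤ (1/β) * Real.exp (-l*t) * (β * g' t * Real.exp (l*t)) := by
          apply mul_le_mul_of_nonneg_left hPle (by positivity)
      _ = g' t * (Real.exp (-l*t) * Real.exp (l*t)) / β * β := by field_simp
      _ = g' t := by
          rw [← Real.exp_add]
          ring_nf
          rw [Real.exp_zero]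
          field_simp
  -- value of K T via integration by parts
  have hKT : K T = ((m:ℝ)*T^(m-1) - Jf m T β) / l := by
    have hKTint : K T = ∫ τ in (0:ℝ)..T, g' τ * Real.exp (-l*(T-τ)) := by
      simp only [hK, hP, ← intervalIntegral.integral_const_mul]
      apply intervalIntegral.integral_congr
      intro x hx
      show Real.exp (-l*T) * (g' x * Real.exp (l*x)) = g' x * Real.exp (-l*(T-x))
      rw [show Real.exp (-l*T) * (g' x * Real.exp (l*x)) = g' x * (Real.exp (-l*T) * Real.exp (l*x)) by ring,
        ← Real.exp_add]
      ring_nf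
    have hVd : ∀ τ ∈ uIcc (0:ℝ) T, HasDerivAt (fun τ => g' τ * Real.exp (-l*(T-τ)) / l)
        (((m:ℝ)*((m-1:ℕ):ℝ)*τ^(m-2)) * Real.exp (-l*(T-τ)) / l + g' τ * Real.exp (-l*(T-τ))) τ := by
      intro τ _
      have hexp : HasDerivAt (fun τ : ℝ => Real.exp (-l*(T-τ))) (Real.exp (-l*(T-τ)) * l) τ := by
        have h : HasDerivAt (fun τ : ℝ => -l*(T-τ)) l τ := by
          have := ((hasDerivAt_id τ).const_mul l).const_add (-l*T)
          convert this using 1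
          · rfl
          · rfl
          · funext x; simp only [id]; ring
          · ring
        exact h.exp
      have := ((hgd τ).mul hexp).div_const l
      convert this using 1
      rfl
      rfl
      rfl
      field_simp
    have hftc := intervalIntegral.integral_eq_sub_of_hasDerivAt hVd
      (by apply ContinuousOn.intervalIntegrable; apply Continuous.continuousOn; fun_prop)
    rw [intervalIntegral.integral_add
        (by apply ContinuousOn.intervalIntegrable; apply Continuous.continuousOn; fun_prop)
        (by apply ContinuousOn.intervalIntegrable; apply Continuous.continuousOn; fun_prop)] at hftc
    have hdiv : (∫ τ in (0:ℝ)..T, ((m:ℝ)*((m-1:ℕ):ℝ)*τ^(m-2)) * Real.exp (-l*(T-τ)) / l)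
        = Jf m T β / l := by
      rw [intervalIntegral.integral_div]
      congr 1
    rw [hdiv] at hftc
    rw [hKTint]
    have hend : g' T * Real.exp (-l*(T-T)) / l - g' 0 * Real.exp (-l*(T-0)) / l
        = (m:ℝ)*T^(m-1) / l := by
      rw [hg'0]
      simp only [sub_self, mul_zero, neg_zero, zero_mul, zero_div, sub_zero, Real.exp_zero, hg']
      ring
    rw [hend] at hftc
    have : ∫ τ in (0:ℝ)..T, g' τ * Real.exp (-l*(T-τ)) = (m:ℝ)*T^(m-1)/l - Jf m T β / l := by
      linarith
    rw [this]; ring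
  -- integral of K
  have hWd : ∀ t ∈ uIcc (0:ℝ) T, HasDerivAt (fun t => (t^(m:ℕ) - K t)/l) (K t) t := by
    intro t _
    have hpow : HasDerivAt (fun t : ℝ => t^(m:ℕ)) ((m:ℝ)*t^(m-1)) t := by
      simpa using hasDerivAt_pow m t
    have := (hpow.sub (hKd t)).div_const l
    convert this using 1
    rfl
    rfl
    rfl
    simp only [hg']
    field_simp
    ring
  have hKint : ∫ t in (0:ℝ)..T, K t = ((T^(m:ℕ) - K T) - (0^(m:ℕ) - K 0))/l := by
    have := intervalIntegral.integral_eq_sub_of_hasDerivAt hWd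
      (hKc.intervalIntegrable 0 T)
    rw [this]; ring
  -- assemble
  have habs : ∀ t ∈ Set.Ioo (0:ℝ) T, |cfD 0 (1-β) g' t - g' t| = g' t - cfD 0 (1-β) g' t := by
    intro t ht
    rw [abs_of_nonpos (by linarith [hsign t ⟨ht.1.le, ht.2.le⟩]), neg_sub]
  calc ∫ t in Set.Ioo 0 T, |cfD 0 (1-β) g' t - g' t|
      = ∫ t in Set.Ioo 0 T, (g' t - cfD 0 (1-β) g' t) := setIntegral_congr_fun measurableSet_Ioo habs
    _ = ∫ t in (0:ℝ)..T, (g' t - cfD 0 (1-β) g' t) := by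
        rw [← integral_Ioc_eq_integral_Ioo, ← intervalIntegral.integral_of_le hT0.le]
    _ = (∫ t in (0:ℝ)..T, g' t) - ∫ t in (0:ℝ)..T, cfD 0 (1-β) g' t := by
        apply intervalIntegral.integral_sub (hg'c.intervalIntegrable 0 T)
        apply IntervalIntegrable.congr_ae ((continuous_const.mul hKc).intervalIntegrable 0 T)
        apply Filter.EventuallyEq.symm
        exact Filter.Eventually.of_forall (fun x => hcf x)
    _ = β * ((m:ℝ)*T^(m-1) - Jf m T β - (1-β)*T^(m:ℕ)) / (1-β)^2 := by
        have hig : ∫ t in (0:ℝ)..T, g' t = T^(m:ℕ) := by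
          simp only [hg']
          rw [intervalIntegral.integral_const_mul, integral_pow]
          have hne : m - 1 + 1 = m := by omega
          have hcast : ((m-1:ℕ):ℝ) + 1 = (m:ℝ) := by
            have : (1:ℕ) ≤ m := by omega
            push_cast [Nat.cast_sub this]; ring
          rw [hne, hcast, zero_pow (by omega), sub_zero]
          field_simp
        have hicf : ∫ t in (0:ℝ)..T, cfD 0 (1-β) g' t = (1/β) * (((T^(m:ℕ) - K T) - (0^(m:ℕ) - K 0))/l) := by
          rw [show (∫ t in (0:ℝ)..T, cfD 0 (1-β) g' t) = ∫ t in (0:ℝ)..T, (1/β) * K t from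
            intervalIntegral.integral_congr (fun x _ => hcf x)]
          rw [intervalIntegral.integral_const_mul, hKint]
        rw [hig, hicf, hK0, hKT, zero_pow (by omega : m ≠ 0)]
        have h1β : (1:ℝ) - β ≠ 0 := by linarith
        rw [hldef]
        field_simp [h1β]
        ring

lemma hasDerivAt_G (m : ℕ) (hm : 2 ≤ m) {T : ℝ} (hT0 : 0 < T) :
    HasDerivAt (fun b : ℝ => Real.Gamma ((m:ℝ)+1) / Real.Gamma ((m:ℝ)+1+b) * T ^ ((m:ℝ)+b))
      (T^((m:ℝ)) * (Real.log T - deriv Real.Gamma ((m:ℝ)+1) / Real.Gamma ((m:ℝ)+1))) 0 := by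
  have hm0 : (0:ℝ) < (m:ℝ) := by positivity
  have hΓpos : 0 < Real.Gamma ((m:ℝ)+1) := Real.Gamma_pos_of_pos (by linarith)
  have hne : ∀ n : ℕ, (m:ℝ)+1 ≠ -n := by
    intro n
    have : (0:ℝ) ≤ (n:ℝ) := Nat.cast_nonneg n
    nlinarith
  have h1 : HasDerivAt (fun b : ℝ => T ^ ((m:ℝ)+b)) (T ^ ((m:ℝ)) * Real.log T) 0 := by
    have hinner : HasDerivAt (fun b : ℝ => ((m:ℝ)+b) * Real.log T) (Real.log T) 0 := by
      simpa using (((hasDerivAt_id (0:ℝ)).const_add (m:ℝ)).mul_const (Real.log T))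
    have := hinner.exp
    have heq : (fun b : ℝ => Real.exp (((m:ℝ)+b) * Real.log T)) = fun b : ℝ => T ^ ((m:ℝ)+b) := by
      funext b
      rw [Real.rpow_def_of_pos hT0]
      ring_nf
    rw [heq] at this
    convert this using 1
    rw [add_zero, Real.rpow_def_of_pos hT0]
    ring
  have h2 : HasDerivAt (fun b : ℝ => Real.Gamma ((m:ℝ)+1+b)) (deriv Real.Gamma ((m:ℝ)+1)) 0 := by
    have hΓ : HasDerivAt Real.Gamma (deriv Real.Gamma ((m:ℝ)+1)) ((m:ℝ)+1) :=
      (Real.differentiableAt_Gamma hne).hasDerivAt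
    have hin : HasDerivAt (fun b : ℝ => (m:ℝ)+1+b) 1 0 := by
      simpa using (hasDerivAt_id (0:ℝ)).const_add ((m:ℝ)+1)
    have := HasDerivAt.comp (0:ℝ) (by rwa [add_zero] : HasDerivAt Real.Gamma
      (deriv Real.Gamma ((m:ℝ)+1)) ((m:ℝ)+1+0)) hin
    rw [mul_one] at this
    exact this
  have h3 := (h1.const_mul (Real.Gamma ((m:ℝ)+1))).div h2 (by rw [add_zero]; exact hΓpos.ne')
  have hfe : (fun b : ℝ => Real.Gamma ((m:ℝ)+1) / Real.Gamma ((m:ℝ)+1+b) * T ^ ((m:ℝ)+b))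
      = (fun y : ℝ => Real.Gamma ((m:ℝ)+1) * T ^ ((m:ℝ)+y) / Real.Gamma ((m:ℝ)+1+y)) := by
    funext b; ring
  have hval : (Real.Gamma ((m:ℝ)+1) * (T ^ ((m:ℝ)) * Real.log T) * Real.Gamma ((m:ℝ)+1+0) -
        Real.Gamma ((m:ℝ)+1) * T ^ ((m:ℝ)+0) * deriv Real.Gamma ((m:ℝ)+1)) /
      Real.Gamma ((m:ℝ)+1+0) ^ 2
      = T^((m:ℝ)) * (Real.log T - deriv Real.Gamma ((m:ℝ)+1) / Real.Gamma ((m:ℝ)+1)) := by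
    rw [add_zero, add_zero]
    field_simp
  rw [hfe, ← hval]
  exact h3

/-- For `g(t) = t^m` on `[0,T]` (so `g'(t) = m t^{m-1}`), `m ≥ 2` fixed and
`0 < T ≤ m-1`, the ratio of the Caputo–Fabrizio and Caputo L¹ errors of order
`1-β` tends to `((m-T)/T)·(1/(Ψ(m+1) - ln T))` as `β → 0⁺`. -/
theorem cf_caputo_speed_ratio (m : ℕ) (hm : 2 ≤ m) (T : ℝ) (hT0 : 0 < T)
    (hTm : T ≤ (m : ℝ) - 1) :
    Tendsto (fun β : ℝ =>
        (∫ t in Set.Ioo 0 T,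
          |cfD 0 (1 - β) (fun τ => (m : ℝ) * τ ^ (m - 1)) t - (m : ℝ) * t ^ (m - 1)|) /
        (∫ t in Set.Ioo 0 T,
          |caputoD 0 (1 - β) (fun τ => (m : ℝ) * τ ^ (m - 1)) t - (m : ℝ) * t ^ (m - 1)|))
      (nhdsWithin 0 (Set.Ioi 0))
      (nhds ((((m : ℝ) - T) / T) * (1 / (digamma ((m : ℝ) + 1) - Real.log T)))) := by
  have hm0 : (0:ℝ) < (m:ℝ) := by positivity
  have hm2 : (2:ℝ) ≤ (m:ℝ) := by exact_mod_cast hm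
  set dg : ℝ := deriv Real.Gamma ((m:ℝ)+1) / Real.Gamma ((m:ℝ)+1) with hdg
  set G : ℝ → ℝ := fun b => Real.Gamma ((m:ℝ)+1) / Real.Gamma ((m:ℝ)+1+b) * T ^ ((m:ℝ)+b)
    with hGdef
  have hΓpos : 0 < Real.Gamma ((m:ℝ)+1) := Real.Gamma_pos_of_pos (by linarith)
  have hG0 : G 0 = T^(m:ℕ) := by
    simp only [hGdef, add_zero, div_self hΓpos.ne', one_mul]
    rw [Real.rpow_natCast]
  have hlogT : Real.log T < dg := by
    calc Real.log T ≤ Real.log ((m:ℝ)-1) := by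
          apply Real.log_le_log hT0 hTm
      _ < dg := digamma_gt m hm
  have hLD : (0:ℝ) < T^((m:ℝ)) * (dg - Real.log T) := by
    apply mul_pos (Real.rpow_pos_of_pos hT0 _)
    linarith
  -- denominator limit
  have hslope : Tendsto (fun β : ℝ => (G 0 - G β)/β) (nhdsWithin 0 (Set.Ioi 0))
      (nhds (T^((m:ℝ)) * (dg - Real.log T))) := by
    have h1 := (hasDerivAt_iff_tendsto_slope).mp (hasDerivAt_G m hm hT0)
    have h2 : Tendsto (slope G 0) (nhdsWithin 0 (Set.Ioi 0))
        (nhds (T^((m:ℝ)) * (Real.log T - dg))) := by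
      apply h1.mono_left
      apply nhdsWithin_mono
      intro x hx
      exact ne_of_gt hx
    have h3 := h2.neg
    rw [show -(T^((m:ℝ)) * (Real.log T - dg)) = T^((m:ℝ)) * (dg - Real.log T) by ring] at h3
    apply h3.congr
    intro β
    rw [slope_def_field]
    field_simp
    rw [sub_zero]; ring
  -- numerator limit
  have hid : Tendsto (fun β : ℝ => β) (nhdsWithin 0 (Set.Ioi 0)) (nhds 0) :=
    tendsto_id.mono_left nhdsWithin_le_nhds
  have hmem : Set.Ioo (0:ℝ) 1 ∈ nhdsWithin 0 (Set.Ioi 0) :=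
    Ioo_mem_nhdsGT_of_mem ⟨le_refl 0, one_pos⟩
  have hJ : Tendsto (fun β : ℝ => Jf m T β) (nhdsWithin 0 (Set.Ioi 0)) (nhds 0) := by
    apply squeeze_zero'
    · filter_upwards [hmem] with β hβ
      exact Jf_nonneg m hT0 hβ.1 hβ.2
    · filter_upwards [hmem] with β hβ
      exact Jf_le m hm hT0 hβ.1 hβ.2
    · have hb : Tendsto (fun β : ℝ => ((m:ℝ)*((m-1:ℕ):ℝ)*T^(m-2)) * (β/(1-β)))
          (nhdsWithin 0 (Set.Ioi 0)) (nhds (((m:ℝ)*((m-1:ℕ):ℝ)*T^(m-2)) * (0/(1-0)))) := by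
        apply Tendsto.const_mul
        exact hid.div ((tendsto_const_nhds.sub hid)) (by norm_num)
      simpa using hb
  have hA : Tendsto (fun β : ℝ => ((m:ℝ)*T^(m-1) - Jf m T β - (1-β)*T^(m:ℕ))/(1-β)^2)
      (nhdsWithin 0 (Set.Ioi 0)) (nhds ((m:ℝ)*T^(m-1) - T^(m:ℕ))) := by
    have h1 : Tendsto (fun β : ℝ => (m:ℝ)*T^(m-1) - Jf m T β - (1-β)*T^(m:ℕ))
        (nhdsWithin 0 (Set.Ioi 0)) (nhds ((m:ℝ)*T^(m-1) - 0 - (1-0)*T^(m:ℕ))) :=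
      (tendsto_const_nhds.sub hJ).sub ((tendsto_const_nhds.sub hid).mul tendsto_const_nhds)
    have h2 : Tendsto (fun β : ℝ => ((1:ℝ)-β)^2) (nhdsWithin 0 (Set.Ioi 0))
        (nhds (((1:ℝ)-0)^2)) := (tendsto_const_nhds.sub hid).pow 2
    have := h1.div h2 (by norm_num)
    rw [show ((m:ℝ)*T^(m-1) - 0 - (1-0)*T^(m:ℕ))/((1:ℝ)-0)^2 = (m:ℝ)*T^(m-1) - T^(m:ℕ) by ring] at this
    exact this
  -- combine
  have hratio := hA.div hslope hLD.ne'
  have heq : ∀ᶠ β in nhdsWithin 0 (Set.Ioi 0),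
      ((m:ℝ)*T^(m-1) - Jf m T β - (1-β)*T^(m:ℕ))/(1-β)^2 / ((G 0 - G β)/β)
      = (∫ t in Set.Ioo 0 T,
          |cfD 0 (1 - β) (fun τ => (m : ℝ) * τ ^ (m - 1)) t - (m : ℝ) * t ^ (m - 1)|) /
        (∫ t in Set.Ioo 0 T,
          |caputoD 0 (1 - β) (fun τ => (m : ℝ) * τ ^ (m - 1)) t - (m : ℝ) * t ^ (m - 1)|) := by
    filter_upwards [hmem] with β hβ
    have hβ0 := hβ.1
    have hβ1 := hβ.2
    rw [cf_L1 m hm hT0 hTm hβ0 hβ1, caputo_L1 m hm hT0 hTm hβ0 hβ1]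
    have hDeq : T^(m:ℕ) - Real.Gamma ((m:ℝ)+1) / Real.Gamma ((m:ℝ)+1+β) * T ^ ((m:ℝ)+β)
        = G 0 - G β := by rw [hG0]
    rw [hDeq, div_div_eq_mul_div]
    ring
  have hfinal := (hratio.congr' heq)
  have hval : ((m:ℝ)*T^(m-1) - T^(m:ℕ)) / (T^((m:ℝ)) * (dg - Real.log T))
      = (((m : ℝ) - T) / T) * (1 / (digamma ((m : ℝ) + 1) - Real.log T)) := by
    have h1 : digamma ((m:ℝ)+1) = dg := rfl
    rw [h1]
    have hTmr : T^((m:ℝ)) = T^(m:ℕ) := Real.rpow_natCast T m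
    rw [hTmr]
    have hpow : T^(m:ℕ) = T^(m-1:ℕ) * T := by
      rw [← pow_succ]
      congr 1
      omega
    rw [hpow]
    have hc : dg - Real.log T ≠ 0 := by linarith
    field_simp
  rw [← hval]
  exact hfinal
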